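/- Any point p ∈ ℝ² is contained in at most 4 squares of a family of closed axis-aligned squares with pairwise disjoint interiors. -/

import Mathlib

open Metric Classical

/-- An axis-aligned square [a,a+h] × [b,b+h] in the Euclidean plane. -/
def square (a b h : ℝ) : Set (EuclideanSpace ℝ (Fin 2)) :=
  {p | p 0 ∈ Set.Icc a (a + h) ∧ p 1 ∈ Set.Icc b (b + h)}

lemma open_rect_subset_interior (a b h : ℝ) :
    {q : EuclideanSpace ℝ (Fin 2) | q 0 ∈ Set.Ioo a (a + h) ∧ q 1 ∈ Set.Ioo b (b + h)}
      ⊆ interior (square a b h) := by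
  apply interior_maximal
  · intro q hq
    exact ⟨Set.Ioo_subset_Icc_self hq.1, Set.Ioo_subset_Icc_self hq.2⟩
  · have h0 : Continuous fun q : EuclideanSpace ℝ (Fin 2) => q 0 :=
      (EuclideanSpace.proj (0 : Fin 2)).continuous
    have h1 : Continuous fun q : EuclideanSpace ℝ (Fin 2) => q 1 :=
      (EuclideanSpace.proj (1 : Fin 2)).continuous
    exact (isOpen_Ioo.preimage h0).inter (isOpen_Ioo.preimage h1)

lemma mem_interior_of (a b h : ℝ) (hh : 0 < h) (p : EuclideanSpace ℝ (Fin 2))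
    (hp : p ∈ square a b h) (ε : ℝ) (hε : 0 < ε)
    (hεx : ε < if p 0 < a + h then a + h - p 0 else h)
    (hεy : ε < if p 1 < b + h then b + h - p 1 else h) :
    (!₂[p 0 + ε * (if p 0 < a + h then 1 else -1),
       p 1 + ε * (if p 1 < b + h then 1 else -1)] : EuclideanSpace ℝ (Fin 2))
      ∈ interior (square a b h) := by
  apply open_rect_subset_interior
  obtain ⟨⟨hax, hxa⟩, ⟨hby, hyb⟩⟩ := hp
  constructor
  · show (p 0 + ε * (if p 0 < a + h then 1 else -1)) ∈ Set.Ioo a (a + h)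
    by_cases hx : p 0 < a + h
    · simp only [if_pos hx] at hεx ⊢
      constructor <;> nlinarith
    · have hx' : p 0 = a + h := le_antisymm hxa (not_lt.1 hx)
      simp only [if_neg hx] at hεx ⊢
      constructor <;> nlinarith
  · show (p 1 + ε * (if p 1 < b + h then 1 else -1)) ∈ Set.Ioo b (b + h)
    by_cases hy : p 1 < b + h
    · simp only [if_pos hy] at hεy ⊢
      constructor <;> nlinarith
    · have hy' : p 1 = b + h := le_antisymm hyb (not_lt.1 hy)
      simp only [if_neg hy] at hεy ⊢
      constructor <;> nlinarith

/-- Any point of the plane lies in at most 4 squares of a family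
of closed axis-aligned squares (of positive side length) with pairwise disjoint
interiors. -/

theorem stmt_18 (F : Finset (ℝ × ℝ × ℝ))
    (hpos : ∀ t ∈ F, 0 < t.2.2)
    (hpair : ∀ t ∈ F, ∀ t' ∈ F, t ≠ t' →
      Disjoint (interior (square t.1 t.2.1 t.2.2)) (interior (square t'.1 t'.2.1 t'.2.2)))
    (p : EuclideanSpace ℝ (Fin 2)) :
    (F.filter (fun t : ℝ × ℝ × ℝ => p ∈ square t.1 t.2.1 t.2.2)).card ≤ 4 := by
  classical
  have : (F.filter (fun t : ℝ × ℝ × ℝ => p ∈ square t.1 t.2.1 t.2.2)).card ≤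
      (Finset.univ : Finset (Bool × Bool)).card := by
    apply Finset.card_le_card_of_injOn
      (fun t : ℝ × ℝ × ℝ => (decide (p 0 < t.1 + t.2.2), decide (p 1 < t.2.1 + t.2.2)))
    · intro _ _; exact Finset.mem_univ _
    · intro t ht t' ht' heq
      simp only [Finset.coe_filter, Set.mem_setOf_eq] at ht ht'
      obtain ⟨htF, htp⟩ := ht
      obtain ⟨ht'F, ht'p⟩ := ht'
      by_contra hne
      have hdisj := hpair t htF t' ht'F hne
      have hiffx : (p 0 < t.1 + t.2.2) ↔ (p 0 < t'.1 + t'.2.2) := by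
        have := congrArg Prod.fst heq
        simpa using this
      have hiffy : (p 1 < t.2.1 + t.2.2) ↔ (p 1 < t'.2.1 + t'.2.2) := by
        have := congrArg Prod.snd heq
        simpa using this
      set A := if p 0 < t.1 + t.2.2 then t.1 + t.2.2 - p 0 else t.2.2 with hA
      set B := if p 1 < t.2.1 + t.2.2 then t.2.1 + t.2.2 - p 1 else t.2.2 with hB
      set A' := if p 0 < t'.1 + t'.2.2 then t'.1 + t'.2.2 - p 0 else t'.2.2 with hA'
      set B' := if p 1 < t'.2.1 + t'.2.2 then t'.2.1 + t'.2.2 - p 1 else t'.2.2 with hB'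
      have hApos : 0 < A := by
        rw [hA]; split <;> [linarith [‹p 0 < t.1 + t.2.2›]; exact hpos t htF]
      have hBpos : 0 < B := by
        rw [hB]; split <;> [linarith [‹p 1 < t.2.1 + t.2.2›]; exact hpos t htF]
      have hA'pos : 0 < A' := by
        rw [hA']; split <;> [linarith [‹p 0 < t'.1 + t'.2.2›]; exact hpos t' ht'F]
      have hB'pos : 0 < B' := by
        rw [hB']; split <;> [linarith [‹p 1 < t'.2.1 + t'.2.2›]; exact hpos t' ht'F]
      set ε := min (min A B) (min A' B') / 2 with hε
      have hεpos : 0 < ε := by positivity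
      have hεA : ε < A := lt_of_lt_of_le
        (half_lt_self (by positivity)) (le_trans (min_le_left _ _) (min_le_left _ _))
      have hεB : ε < B := lt_of_lt_of_le
        (half_lt_self (by positivity)) (le_trans (min_le_left _ _) (min_le_right _ _))
      have hεA' : ε < A' := lt_of_lt_of_le
        (half_lt_self (by positivity)) (le_trans (min_le_right _ _) (min_le_left _ _))
      have hεB' : ε < B' := lt_of_lt_of_le
        (half_lt_self (by positivity)) (le_trans (min_le_right _ _) (min_le_right _ _))
      have hq1 := mem_interior_of t.1 t.2.1 t.2.2 (hpos t htF) p htp ε hεpos hεA hεB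
      have hq2 := mem_interior_of t'.1 t'.2.1 t'.2.2 (hpos t' ht'F) p ht'p ε hεpos hεA' hεB'
      have hsame :
          (!₂[p 0 + ε * (if p 0 < t.1 + t.2.2 then 1 else -1),
             p 1 + ε * (if p 1 < t.2.1 + t.2.2 then 1 else -1)] :
             EuclideanSpace ℝ (Fin 2)) =
          (!₂[p 0 + ε * (if p 0 < t'.1 + t'.2.2 then 1 else -1),
             p 1 + ε * (if p 1 < t'.2.1 + t'.2.2 then 1 else -1)] :
             EuclideanSpace ℝ (Fin 2)) := by
        have hx' : (if p 0 < t.1 + t.2.2 then (1:ℝ) else -1) =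
            (if p 0 < t'.1 + t'.2.2 then (1:ℝ) else -1) := by
          by_cases hx : p 0 < t.1 + t.2.2
          · rw [if_pos hx, if_pos (hiffx.1 hx)]
          · rw [if_neg hx, if_neg (fun h => hx (hiffx.2 h))]
        have hy' : (if p 1 < t.2.1 + t.2.2 then (1:ℝ) else -1) =
            (if p 1 < t'.2.1 + t'.2.2 then (1:ℝ) else -1) := by
          by_cases hy : p 1 < t.2.1 + t.2.2
          · rw [if_pos hy, if_pos (hiffy.1 hy)]
          · rw [if_neg hy, if_neg (fun h => hy (hiffy.2 h))]
        rw [hx', hy']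
      rw [hsame] at hq1
      exact Set.disjoint_left.1 hdisj hq1 hq2
  simpa using this
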